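/- Let (A, {•,•}_J) be a Jacobi algebra over a field k, h ∈ A with r·{•,•}_J = 0 for all r ∈ Ann_A(h). If there exists a right (A, Ah ⊗ A)-connection on A, then there exists a ∈ A such that a·r = {1, r}_J for all r ∈ Ann_A(h). -/

import Mathlib

open TensorProduct

/-- Let `(A, J)` be a Jacobi algebra over a field `k` and `h ∈ A`
with `r * J a b = 0` whenever `r * h = 0`. If there exists a right
`(A, Ah ⊗ A)`-connection on `A` (equivalently, a connection character
`φ : Ah ⊗ A → A`), then there exists `a ∈ A` with `a * r = J 1 r` for all
`r ∈ Ann_A(h)`. -/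
theorem jacobi_Ah_connection_obstruction
    (k A : Type*) [Field k] [CommRing A] [Algebra k A]
    (J : A → A → A)
    (hbilₗ : ∀ (r : k) (a a' b : A), J (r • a + a') b = r • J a b + J a' b)
    (hbilᵣ : ∀ (r : k) (a b b' : A), J a (r • b + b') = r • J a b + J a b')
    (hskew : ∀ a b, J a b = - J b a)
    (hjacobi : ∀ a b c, J a (J b c) + J b (J c a) + J c (J a b) = 0)
    (hleib : ∀ a b c, J (a * b) c = a * J b c + b * J a c - a * b * J 1 c)
    (h : A)
    (hann : ∀ r : A, r * h = 0 → ∀ a b : A, r * J a b = 0)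
    -- existence of a right `(A, Ah ⊗ A)`-connection character on `A`
    (hconn : ∃ φ : (LinearMap.range (LinearMap.lsmul A (A ⊗[k] A) h) :
        Submodule A (A ⊗[k] A)) → A,
      (∀ (r : k) (u v : LinearMap.range (LinearMap.lsmul A (A ⊗[k] A) h)),
        φ (r • u + v) = r • φ u + φ v) ∧
      (∀ (c a b : A),
        φ (c • (⟨a • (h • ((1 : A) ⊗ₜ[k] b)),
            Submodule.smul_mem _ a ⟨(1 : A) ⊗ₜ[k] b, rfl⟩⟩ :
            LinearMap.range (LinearMap.lsmul A (A ⊗[k] A) h)))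
          = c * φ ⟨a • (h • ((1 : A) ⊗ₜ[k] b)),
              Submodule.smul_mem _ a ⟨(1 : A) ⊗ₜ[k] b, rfl⟩⟩
            - a * (J b c + c * J 1 b))) :
    ∃ a : A, ∀ r : A, r * h = 0 → a * r = J 1 r := by
  obtain ⟨φ, hlin, hφ⟩ := hconn
  have hz : φ 0 = 0 := by
    have h2 := hlin 1 0 0
    simp only [one_smul, add_zero] at h2
    have h2' : φ 0 = φ 0 + φ 0 := by simpa using h2
    exact (left_eq_add.mp h2')
  refine ⟨φ ⟨(1 : A) • (h • ((1 : A) ⊗ₜ[k] (1 : A))),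
      Submodule.smul_mem _ 1 ⟨(1 : A) ⊗ₜ[k] (1 : A), rfl⟩⟩, ?_⟩
  intro r hr
  have key := hφ r 1 1
  have harg : (r • (⟨(1 : A) • (h • ((1 : A) ⊗ₜ[k] (1 : A))),
      Submodule.smul_mem _ 1 ⟨(1 : A) ⊗ₜ[k] (1 : A), rfl⟩⟩ :
      LinearMap.range (LinearMap.lsmul A (A ⊗[k] A) h))) = 0 := by
    apply Subtype.ext
    show r • ((1 : A) • (h • ((1 : A) ⊗ₜ[k] (1 : A)))) = 0
    rw [one_smul, smul_smul, hr, zero_smul]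
  rw [harg, hz] at key
  have hJ11 := hann r hr 1 1
  linear_combination (-1 : A) * key + hJ11
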